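/- Interior version of the three lines theorem: Let M₀, M₁, c > 0, and let f be analytic on the open strip S° = {z : 0 < Re z < 1} satisfying |f(z)| ≤ c(1 + |z|) there, and lim_{r → 0⁺} sup{|f(z)| : z ∈ S°, 0 < |Re z − j| < r} ≤ M_j for j = 0, 1. Then |f(z)| ≤ M₀^{1 − Re z} · M₁^{Re z} for all z ∈ S°. -/

import Mathlib

open Complex Set Filter

private lemma strip_bound_aux {M0 M1 c : ℝ} (hc : 0 < c) {δ : ℝ}
    (hδ0 : 0 < δ) (hδ : δ < 1 - δ)
    (f : ℂ → ℂ)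
    (hanal : DifferentiableOn ℂ f {z : ℂ | 0 < z.re ∧ z.re < 1})
    (hgrow : ∀ z : ℂ, 0 < z.re → z.re < 1 → ‖f z‖ ≤ c * (1 + ‖z‖))
    (hbd0 : ∀ z : ℂ, z.re = δ → ‖f z‖ ≤ M0)
    (hbd1 : ∀ z : ℂ, z.re = 1 - δ → ‖f z‖ ≤ M1) :
    ∀ z : ℂ, δ ≤ z.re → z.re ≤ 1 - δ → ‖f z‖ ≤ max M0 M1 := by
  intro z hza hzb
  have hsub : (re ⁻¹' Ioo δ (1 - δ)) ⊆ {z : ℂ | 0 < z.re ∧ z.re < 1} := by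
    intro w hw
    obtain ⟨h1, h2⟩ := hw
    exact ⟨by linarith, by linarith⟩
  have hopen : IsOpen {z : ℂ | 0 < z.re ∧ z.re < 1} := by
    have : {z : ℂ | 0 < z.re ∧ z.re < 1} = re ⁻¹' Ioo 0 1 := by
      ext w; simp [Set.mem_Ioo]
    rw [this]
    exact isOpen_Ioo.preimage continuous_re
  have hclos : closure (re ⁻¹' Ioo δ (1 - δ)) ⊆ {z : ℂ | 0 < z.re ∧ z.re < 1} := by
    have h1 : closure (re ⁻¹' Ioo δ (1 - δ)) ⊆ re ⁻¹' Icc δ (1 - δ) := by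
      apply closure_minimal (preimage_mono Ioo_subset_Icc_self)
      exact (isClosed_Icc.preimage continuous_re)
    intro w hw
    obtain ⟨ha', hb'⟩ := h1 hw
    exact ⟨by linarith, by linarith⟩
  refine PhragmenLindelof.vertical_strip
    (f := f) (a := δ) (b := 1 - δ)
    ⟨hanal.mono hsub, (hanal.continuousOn.mono hclos)⟩ ?_
    (fun w hw => (hbd0 w hw).trans (le_max_left _ _))
    (fun w hw => (hbd1 w hw).trans (le_max_right _ _)) hza hzb
  · refine ⟨1, ?_, 1, ?_⟩
    · have h1 : (1:ℝ) < Real.pi := by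
        have := Real.pi_gt_three; linarith
      have h2 : 1 - δ - δ ≤ 1 := by linarith
      calc (1:ℝ) < Real.pi / 1 := by simpa using h1
        _ ≤ Real.pi / (1 - δ - δ) := by
            apply div_le_div_of_nonneg_left Real.pi_pos.le (by linarith) h2
    · rw [Asymptotics.isBigO_iff]
      refine ⟨2 * c, ?_⟩
      rw [eventually_inf_principal]
      apply Filter.Eventually.of_forall
      intro w hw
      have hw1 : 0 < w.re := lt_trans hδ0 hw.1
      have hw2 : w.re < 1 := by have := hw.2; linarith
      have hb1 : ‖f w‖ ≤ c * (1 + ‖w‖) := hgrow w hw1 hw2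
      have hb2 : ‖w‖ ≤ 1 + |w.im| := by
        calc ‖w‖ ≤ |w.re| + |w.im| := Complex.norm_le_abs_re_add_abs_im w
          _ ≤ 1 + |w.im| := by
              have : |w.re| ≤ 1 := by rw [abs_le]; constructor <;> linarith
              linarith
      have key : 2 + |w.im| ≤ Real.exp (Real.exp |w.im|) := by
        have e1 : |w.im| + 1 ≤ Real.exp |w.im| := by
          have := Real.add_one_le_exp |w.im|; linarith
        have e2 : Real.exp |w.im| + 1 ≤ Real.exp (Real.exp |w.im|) := by
          have := Real.add_one_le_exp (Real.exp |w.im|); linarith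
        linarith
      have hexp : 0 < Real.exp (Real.exp |w.im|) := Real.exp_pos _
      calc ‖f w‖ ≤ c * (1 + ‖w‖) := hb1
        _ ≤ c * (2 + |w.im|) := by nlinarith
        _ ≤ c * Real.exp (Real.exp |w.im|) := by nlinarith
        _ ≤ 2 * c * ‖Real.exp (1 * Real.exp (1 * |w.im|))‖ := by
            have hnm : ‖Real.exp (1 * Real.exp (1 * |w.im|))‖
                = Real.exp (Real.exp |w.im|) := by
              simp [Real.norm_eq_abs, abs_of_pos (Real.exp_pos _)]
            rw [hnm]
            nlinarith

theorem three_lines_theorem_interior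
    (M0 M1 c : ℝ) (hM0 : 0 < M0) (hM1 : 0 < M1) (hc : 0 < c)
    (f : ℂ → ℂ)
    (hanal : DifferentiableOn ℂ f {z : ℂ | 0 < z.re ∧ z.re < 1})
    (hgrow : ∀ z : ℂ, 0 < z.re → z.re < 1 → ‖f z‖ ≤ c * (1 + ‖z‖))
    (h0 : ∀ ε > (0:ℝ), ∃ r > (0:ℝ), ∀ z : ℂ, 0 < z.re → z.re < 1 →
      z.re < r → ‖f z‖ ≤ M0 + ε)
    (h1 : ∀ ε > (0:ℝ), ∃ r > (0:ℝ), ∀ z : ℂ, 0 < z.re → z.re < 1 →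
      1 - z.re < r → ‖f z‖ ≤ M1 + ε) :
    ∀ z : ℂ, 0 < z.re → z.re < 1 → ‖f z‖ ≤ M0 ^ (1 - z.re) * M1 ^ z.re := by
  intro z hz0 hz1
  have key : ∀ ε > (0:ℝ), ‖f z‖ ≤ (M0 + ε) ^ (1 - z.re) * (M1 + ε) ^ z.re := by
    intro ε hε
    obtain ⟨r0, hr0, H0⟩ := h0 ε hε
    obtain ⟨r1, hr1, H1⟩ := h1 ε hε
    set m : ℝ := min (min r0 r1) (min z.re (1 - z.re)) with hm
    have hm0 : 0 < m := lt_min (lt_min hr0 hr1) (lt_min hz0 (by linarith))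
    have key2 : ∀ δ ∈ Ioo (0:ℝ) m,
        ‖f z‖ ≤ (M0 + ε) ^ (1 - (z.re - δ)/(1 - 2*δ)) * (M1 + ε) ^ ((z.re - δ)/(1 - 2*δ)) := by
      intro δ hδ
      obtain ⟨hδ0, hδm⟩ := hδ
      have hδr0 : δ < r0 := lt_of_lt_of_le hδm ((min_le_left _ _).trans (min_le_left _ _))
      have hδr1 : δ < r1 := lt_of_lt_of_le hδm ((min_le_left _ _).trans (min_le_right _ _))
      have hδx : δ < z.re := lt_of_lt_of_le hδm ((min_le_right _ _).trans (min_le_left _ _))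
      have hδx1 : δ < 1 - z.re := lt_of_lt_of_le hδm ((min_le_right _ _).trans (min_le_right _ _))
      have hb : (0:ℝ) < 1 - 2*δ := by linarith
      set t : ℝ := 1 - 2*δ with ht
      -- the scaled function
      set g : ℂ → ℂ := fun w => f ((δ:ℂ) + (t:ℂ) * w) with hg
      have hre : ∀ w : ℂ, ((δ:ℂ) + (t:ℂ) * w).re = δ + t * w.re := by
        intro w; simp [Complex.add_re, Complex.mul_re]
      -- boundedness of f on the substrip
      have hbdd : ∀ w : ℂ, δ ≤ w.re → w.re ≤ 1 - δ →
          ‖f w‖ ≤ max (M0 + ε) (M1 + ε) := by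
        apply strip_bound_aux hc hδ0 (by linarith) f hanal hgrow
        · intro w hw
          exact H0 w (by rw [hw]; exact hδ0) (by rw [hw]; linarith) (by rw [hw]; exact hδr0)
        · intro w hw
          exact H1 w (by rw [hw]; linarith) (by rw [hw]; linarith) (by rw [hw]; linarith)
      -- g is differentiable on the strip, continuous on the closed strip
      have hmap : ∀ w : ℂ, w ∈ Complex.HadamardThreeLines.verticalClosedStrip 0 1 →
          ((δ:ℂ) + (t:ℂ) * w) ∈ {z : ℂ | 0 < z.re ∧ z.re < 1} := by
        intro w hw
        have hw' : (0:ℝ) ≤ w.re ∧ w.re ≤ 1 := hw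
        constructor
        · rw [hre]; nlinarith [hw'.1]
        · rw [hre]; nlinarith [hw'.2]
      have haff : Differentiable ℂ (fun w : ℂ => (δ:ℂ) + (t:ℂ) * w) := by
        apply Differentiable.add (differentiable_const _)
        exact (differentiable_id.const_mul _)
      have hVsub : Complex.HadamardThreeLines.verticalStrip 0 1 ⊆
          Complex.HadamardThreeLines.verticalClosedStrip 0 1 :=
        Set.preimage_mono Set.Ioo_subset_Icc_self
      have hdg : DiffContOnCl ℂ g (Complex.HadamardThreeLines.verticalStrip 0 1) := by
        constructor
        · apply DifferentiableOn.comp hanal (haff.differentiableOn)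
          intro w hw
          exact hmap w (hVsub hw)
        · have hclos : closure (Complex.HadamardThreeLines.verticalStrip 0 1) ⊆
              Complex.HadamardThreeLines.verticalClosedStrip 0 1 := by
            apply closure_minimal
            · exact hVsub
            · exact (isClosed_Icc.preimage continuous_re)
          apply ContinuousOn.comp hanal.continuousOn haff.continuous.continuousOn
          intro w hw
          exact hmap w (hclos hw)
      have hBdd : BddAbove ((norm ∘ g) '' Complex.HadamardThreeLines.verticalClosedStrip 0 1) := by
        refine ⟨max (M0 + ε) (M1 + ε), ?_⟩
        rintro y ⟨w, hw, rfl⟩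
        have hw' : (0:ℝ) ≤ w.re ∧ w.re ≤ 1 := hw
        apply hbdd
        · rw [hre]; nlinarith [hw'.1]
        · rw [hre]; nlinarith [hw'.2]
      -- boundary bounds for g
      have hga : ∀ w : ℂ, w ∈ re ⁻¹' {(0:ℝ)} → ‖g w‖ ≤ M0 + ε := by
        intro w hw
        have hw0 : w.re = 0 := hw
        apply H0 <;> rw [hre, hw0] <;> [skip; skip; skip] <;> simp only [mul_zero, add_zero]
        · exact hδ0
        · linarith
        · exact hδr0
      have hgb : ∀ w : ℂ, w ∈ re ⁻¹' {(1:ℝ)} → ‖g w‖ ≤ M1 + ε := by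
        intro w hw
        have hw1 : w.re = 1 := hw
        apply H1 <;> rw [hre, hw1, mul_one]
        · linarith
        · linarith
        · linarith
      -- apply Hadamard
      set w0 : ℂ := ((t:ℂ))⁻¹ * (z - (δ:ℂ)) with hw0
      have htne : (t:ℂ) ≠ 0 := by
        simp only [ne_eq, Complex.ofReal_eq_zero]
        linarith
      have hgw0 : g w0 = f z := by
        rw [hg]
        rw [hw0]
        field_simp
        ring_nf
      have hw0re : w0.re = (z.re - δ) / t := by
        rw [hw0]
        have h1 : ((t:ℂ))⁻¹ = ((t⁻¹ : ℝ) : ℂ) := by push_cast; ring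
        rw [h1, Complex.re_ofReal_mul, Complex.sub_re, Complex.ofReal_re,
          div_eq_inv_mul]
      have hw0mem : w0 ∈ Complex.HadamardThreeLines.verticalClosedStrip 0 1 := by
        constructor
        · rw [hw0re]
          apply div_nonneg (by linarith) (by linarith)
        · rw [hw0re]
          rw [div_le_one hb]
          linarith
      have := Complex.HadamardThreeLines.norm_le_interp_of_mem_verticalClosedStrip₀₁' g
        hw0mem hdg hBdd hga hgb
      rw [hgw0, hw0re] at this
      exact this
    -- take the limit δ → 0⁺
    have hcont : Filter.Tendsto
        (fun δ : ℝ => (M0 + ε) ^ (1 - (z.re - δ)/(1 - 2*δ)) * (M1 + ε) ^ ((z.re - δ)/(1 - 2*δ)))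
        (nhdsWithin 0 (Ioi 0)) (nhds ((M0 + ε) ^ (1 - z.re) * (M1 + ε) ^ z.re)) := by
      have hquot : Filter.Tendsto (fun δ : ℝ => (z.re - δ)/(1 - 2*δ)) (nhds 0) (nhds z.re) := by
        have : ContinuousAt (fun δ : ℝ => (z.re - δ)/(1 - 2*δ)) 0 := by
          apply ContinuousAt.div
          · exact (continuous_const.sub continuous_id).continuousAt
          · exact (continuous_const.sub (continuous_const.mul continuous_id)).continuousAt
          · norm_num
        have h := this.tendsto
        simpa using h
      have h1c : ContinuousAt (fun s : ℝ => (M0 + ε) ^ (1 - s) * (M1 + ε) ^ s) z.re := by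
        apply ContinuousAt.mul
        · exact (Real.continuousAt_const_rpow (by positivity)).comp
            ((continuous_const.sub continuous_id).continuousAt)
        · exact Real.continuousAt_const_rpow (by positivity)
      exact (h1c.tendsto.comp hquot).mono_left nhdsWithin_le_nhds
    refine ge_of_tendsto hcont ?_
    filter_upwards [Ioo_mem_nhdsGT hm0] with δ hδ
    exact key2 δ hδ
  -- take the limit ε → 0⁺
  have hcont : Filter.Tendsto
      (fun ε : ℝ => (M0 + ε) ^ (1 - z.re) * (M1 + ε) ^ z.re)
      (nhdsWithin 0 (Ioi 0)) (nhds (M0 ^ (1 - z.re) * M1 ^ z.re)) := by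
    have : ContinuousAt (fun ε : ℝ => (M0 + ε) ^ (1 - z.re) * (M1 + ε) ^ z.re) 0 := by
      apply ContinuousAt.mul
      · apply ContinuousAt.rpow_const
        · exact (continuous_const.add continuous_id).continuousAt
        · left; simpa using hM0.ne'
      · apply ContinuousAt.rpow_const
        · exact (continuous_const.add continuous_id).continuousAt
        · left; simpa using hM1.ne'
    have h := this.tendsto
    simp only [add_zero] at h
    exact h.mono_left nhdsWithin_le_nhds
  refine ge_of_tendsto hcont ?_
  filter_upwards [self_mem_nhdsWithin] with ε hε
  exact key ε hε
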